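/- Let G be a finitely generated abelian group, p ∈ 2G a non-torsion element, and define d := max{s : s divides p in G}, d_π := divisibility of the image of p in G/T (T the torsion subgroup), and d_m := max{s : ∃ m ∈ ℤ, s·m² divides m·p in G}. Then d divides d_m, d_m divides d_π, and d = d_π if and only if d_m = d_π. -/

import Mathlib

section Stmt15Helpers
variable {G : Type*} [AddCommGroup G]

private lemma stmt15_fin_of_smul (w : G) (g : ℕ) (hg : 0 < g)
    (h : IsOfFinAddOrder ((g : ℤ) • w)) : IsOfFinAddOrder w := by
  rw [isOfFinAddOrder_iff_nsmul_eq_zero] at h ⊢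
  obtain ⟨n, hn, hh⟩ := h
  refine ⟨n * g, by positivity, ?_⟩
  rw [natCast_zsmul, smul_smul] at hh
  exact hh

private lemma stmt15_cancel_coprime (x : G) (n k : ℕ) (hcop : Nat.Coprime n k)
    (h : ∃ w : G, (n : ℤ) • x = (k : ℤ) • w) : ∃ z : G, x = (k : ℤ) • z := by
  obtain ⟨w, hw⟩ := h
  obtain ⟨α, β, hαβ⟩ := Nat.isCoprime_iff_coprime.mpr hcop
  refine ⟨α • w + β • x, ?_⟩
  calc x = (α * (n : ℤ) + β * (k : ℤ)) • x := by rw [hαβ, one_smul]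
    _ = α • ((n : ℤ) • x) + β • ((k : ℤ) • x) := by rw [add_smul, mul_smul, mul_smul]
    _ = (k : ℤ) • (α • w + β • x) := by rw [hw, smul_add, smul_comm α, smul_comm β]

private lemma stmt15_smul_lcm (x : G) (k₁ k₂ : ℕ)
    (h₁ : ∃ a : G, x = (k₁ : ℤ) • a) (h₂ : ∃ b : G, x = (k₂ : ℤ) • b) :
    ∃ c : G, x = ((Nat.lcm k₁ k₂ : ℕ) : ℤ) • c := by
  obtain ⟨a, ha⟩ := h₁
  obtain ⟨b, hb⟩ := h₂
  rcases Nat.eq_zero_or_pos k₁ with h | hk₁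
  · subst h; refine ⟨0, by simp_all⟩
  rcases Nat.eq_zero_or_pos k₂ with h | hk₂
  · subst h; refine ⟨0, by simp_all⟩
  set g := Nat.gcd k₁ k₂ with hg
  have hgpos : 0 < g := Nat.gcd_pos_of_pos_left _ hk₁
  obtain ⟨α, β, hαβ⟩ := Nat.isCoprime_iff_coprime.mpr (Nat.coprime_div_gcd_div_gcd hgpos)
  have e₁ : (k₁ / g) * k₂ = Nat.lcm k₁ k₂ := by
    have h1 : g * ((k₁ / g) * k₂) = g * Nat.lcm k₁ k₂ := by
      rw [← mul_assoc, Nat.mul_div_cancel' (Nat.gcd_dvd_left _ _), Nat.gcd_mul_lcm]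
    exact Nat.eq_of_mul_eq_mul_left hgpos h1
  have e₂ : (k₂ / g) * k₁ = Nat.lcm k₁ k₂ := by
    have h1 : g * ((k₂ / g) * k₁) = g * Nat.lcm k₁ k₂ := by
      rw [← mul_assoc, Nat.mul_div_cancel' (Nat.gcd_dvd_right _ _), Nat.gcd_mul_lcm, Nat.mul_comm]
    exact Nat.eq_of_mul_eq_mul_left hgpos h1
  refine ⟨α • b + β • a, ?_⟩
  have hx1 : ((k₁ / g : ℕ) : ℤ) • x = ((Nat.lcm k₁ k₂ : ℕ) : ℤ) • b := by
    rw [hb, smul_smul, ← Nat.cast_mul, e₁]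
  have hx2 : ((k₂ / g : ℕ) : ℤ) • x = ((Nat.lcm k₁ k₂ : ℕ) : ℤ) • a := by
    rw [ha, smul_smul, ← Nat.cast_mul, e₂]
  calc x = (α * ((k₁ / g : ℕ) : ℤ) + β * ((k₂ / g : ℕ) : ℤ)) • x := by rw [hαβ, one_smul]
    _ = α • (((k₁ / g : ℕ) : ℤ) • x) + β • (((k₂ / g : ℕ) : ℤ) • x) := by
        rw [add_smul, mul_smul, mul_smul]
    _ = ((Nat.lcm k₁ k₂ : ℕ) : ℤ) • (α • b + β • a) := by
        rw [hx1, hx2, smul_add, smul_comm α, smul_comm β]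

private lemma stmt15_tors_lcm (p : G) {k₁ k₂ : ℕ} (hk₁ : 0 < k₁) (hk₂ : 0 < k₂)
    (h₁ : ∃ a : G, IsOfFinAddOrder (p - (k₁ : ℤ) • a))
    (h₂ : ∃ b : G, IsOfFinAddOrder (p - (k₂ : ℤ) • b)) :
    ∃ c : G, IsOfFinAddOrder (p - ((Nat.lcm k₁ k₂ : ℕ) : ℤ) • c) := by
  obtain ⟨a, ha⟩ := h₁
  obtain ⟨b, hb⟩ := h₂
  set g := Nat.gcd k₁ k₂ with hgdef
  have hgpos : 0 < g := Nat.gcd_pos_of_pos_left _ hk₁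
  obtain ⟨α, β, hαβ⟩ := Nat.isCoprime_iff_coprime.mpr (Nat.coprime_div_gcd_div_gcd hgpos)
  have hsum : α * (k₁ : ℤ) + β * (k₂ : ℤ) = (g : ℤ) := by
    have h1 : (g : ℤ) * (α * ((k₁ / g : ℕ) : ℤ) + β * ((k₂ / g : ℕ) : ℤ)) = (g : ℤ) * 1 := by
      rw [hαβ]
    have e1 : (g : ℤ) * ((k₁ / g : ℕ) : ℤ) = (k₁ : ℤ) := by
      rw [← Nat.cast_mul, Nat.mul_div_cancel' (Nat.gcd_dvd_left _ _)]
    have e2 : (g : ℤ) * ((k₂ / g : ℕ) : ℤ) = (k₂ : ℤ) := by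
      rw [← Nat.cast_mul, Nat.mul_div_cancel' (Nat.gcd_dvd_right _ _)]
    calc α * (k₁ : ℤ) + β * (k₂ : ℤ)
        = (g : ℤ) * (α * ((k₁ / g : ℕ) : ℤ) + β * ((k₂ / g : ℕ) : ℤ)) := by
          rw [mul_add, ← mul_assoc, ← mul_assoc, mul_comm (g:ℤ) α, mul_comm (g:ℤ) β,
            mul_assoc, mul_assoc, e1, e2]
      _ = (g : ℤ) := by rw [h1]; ring
  have hprod : (k₁ : ℤ) * (k₂ : ℤ) = (g : ℤ) * ((Nat.lcm k₁ k₂ : ℕ) : ℤ) := by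
    rw [← Nat.cast_mul, ← Nat.cast_mul, Nat.gcd_mul_lcm]
  set c : G := α • b + β • a with hc
  have key : (g : ℤ) • (p - ((Nat.lcm k₁ k₂ : ℕ) : ℤ) • c) =
      α • ((k₁ : ℤ) • (p - (k₂ : ℤ) • b)) + β • ((k₂ : ℤ) • (p - (k₁ : ℤ) • a)) := by
    rw [hc]
    match_scalars
    · linear_combination hsum.symm
    · linear_combination α * hprod
    · linear_combination β * hprod
  refine ⟨c, stmt15_fin_of_smul _ g hgpos ?_⟩
  rw [key]
  exact ((hb.zsmul).zsmul).add ((ha.zsmul).zsmul)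

end Stmt15Helpers


/-- for a non-torsion element `p ∈ 2G` of a finitely generated abelian
group `G`, the three divisibilities
`d = max{s : s ∣ p in G}`, `d_π = max{s : s ∣ p mod torsion}` and
`d_m = max{s : ∃ m, s·m² ∣ m·p in G}` satisfy `d ∣ d_m`, `d_m ∣ d_π` and
`d = d_π ↔ d_m = d_π`. -/
theorem stmt15 {G : Type*} [AddCommGroup G] [AddGroup.FG G]
    (p : G) (hp2 : ∃ g : G, p = 2 • g) (hptor : ¬ IsOfFinAddOrder p)
    (d dπ dm : ℕ)
    (hd : (∃ y : G, p = (d : ℤ) • y) ∧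
        ∀ s : ℕ, (∃ y : G, p = (s : ℤ) • y) → s ≤ d)
    (hdπ : (∃ y : G, IsOfFinAddOrder (p - (dπ : ℤ) • y)) ∧
        ∀ s : ℕ, (∃ y : G, IsOfFinAddOrder (p - (s : ℤ) • y)) → s ≤ dπ)
    (hdm : (∃ (m : ℕ) (y : G), 0 < m ∧ (m : ℤ) • p = ((dm * m ^ 2 : ℕ) : ℤ) • y) ∧
        ∀ s : ℕ, (∃ (m : ℕ) (y : G), 0 < m ∧ (m : ℤ) • p = ((s * m ^ 2 : ℕ) : ℤ) • y) → s ≤ dm) :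
    d ∣ dm ∧ dm ∣ dπ ∧ (d = dπ ↔ dm = dπ) := by
  obtain ⟨⟨y₀, hy₀⟩, hdmax⟩ := hd
  obtain ⟨⟨m, y, hm, hmy⟩, hmmax⟩ := hdm
  obtain ⟨hdπ1, hdπmax⟩ := hdπ
  have hm0 : m ≠ 0 := hm.ne'
  -- positivity of the three numbers
  have hd0 : d ≠ 0 := by
    rintro rfl
    exact hptor (by rw [hy₀]; simpa using isOfFinAddOrder_iff_nsmul_eq_zero.mpr ⟨1, one_pos, by simp⟩)
  have hdm0 : dm ≠ 0 := by
    rintro rfl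
    apply hptor
    have h0 : (m : ℤ) • p = 0 := by simpa using hmy
    exact isOfFinAddOrder_iff_nsmul_eq_zero.mpr ⟨m, hm, by rw [← natCast_zsmul]; exact h0⟩
  have hdπ0 : 0 < dπ := by
    rcases Nat.eq_zero_or_pos dπ with h | h
    · exfalso
      obtain ⟨z, hz⟩ := hdπ1
      rw [h] at hz
      exact hptor (by simpa using hz)
    · exact h
  -- every divisor mod torsion divides dπ
  have hdvdπ : ∀ s : ℕ, (∃ z : G, IsOfFinAddOrder (p - (s : ℤ) • z)) → s ∣ dπ := by
    intro s hs
    have hspos : 0 < s := by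
      rcases Nat.eq_zero_or_pos s with h | h
      · exfalso
        obtain ⟨z, hz⟩ := hs
        rw [h] at hz
        exact hptor (by simpa using hz)
      · exact h
    have hlcm := stmt15_tors_lcm p hspos hdπ0 hs hdπ1
    have hle := hdπmax _ hlcm
    have heq : Nat.lcm s dπ = dπ :=
      Nat.le_antisymm hle
        (Nat.le_of_dvd (Nat.pos_of_ne_zero (Nat.lcm_ne_zero hspos.ne' hdπ0.ne'))
          (Nat.dvd_lcm_right s dπ))
    exact heq ▸ Nat.dvd_lcm_left s dπ
  -- Part B : dm ∣ dπ
  have htorsB : IsOfFinAddOrder (p - ((dm * m : ℕ) : ℤ) • y) := by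
    rw [isOfFinAddOrder_iff_nsmul_eq_zero]
    refine ⟨m, hm, ?_⟩
    rw [← natCast_zsmul]
    have hsc : ((dm * m ^ 2 : ℕ) : ℤ) - (m : ℤ) * ((dm * m : ℕ) : ℤ) = 0 := by push_cast; ring
    calc (m : ℤ) • (p - ((dm * m : ℕ) : ℤ) • y)
        = ((dm * m ^ 2 : ℕ) : ℤ) • y - ((m : ℤ) * ((dm * m : ℕ) : ℤ)) • y := by
          rw [smul_sub, hmy, smul_smul]
      _ = 0 := by rw [← sub_smul, hsc, zero_smul]
  have hBdvd : dm * m ∣ dπ := hdvdπ _ ⟨y, htorsB⟩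
  have hB : dm ∣ dπ := dvd_trans (dvd_mul_right dm m) hBdvd
  -- Part A : d ∣ dm
  have hA : d ∣ dm := by
    rw [← Nat.factorization_le_iff_dvd hd0 hdm0, Finsupp.le_def]
    intro ℓ
    by_cases hℓ : ℓ.Prime
    · by_contra hlt
      push_neg at hlt
      set i := d.factorization ℓ with hi
      set j := dm.factorization ℓ with hj
      set e := m.factorization ℓ with he
      set mb := m / ℓ ^ e with hmbdef
      have hmb0 : mb ≠ 0 := (Nat.ordCompl_pos ℓ hm0).ne'
      have hN0 : dm * m ^ 2 ≠ 0 := by positivity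
      set v := (dm * m ^ 2).factorization ℓ with hv
      set r := (dm * m ^ 2) / ℓ ^ v with hrdef
      have hr0 : r ≠ 0 := (Nat.ordCompl_pos ℓ hN0).ne'
      have hmdec : ℓ ^ e * mb = m := Nat.ordProj_mul_ordCompl_eq_self m ℓ
      have hNdec : ℓ ^ v * r = dm * m ^ 2 := Nat.ordProj_mul_ordCompl_eq_self _ ℓ
      -- witness 1 : mb • p divisible by d * mb
      have h1 : ∃ z : G, (mb : ℤ) • p = ((d * mb : ℕ) : ℤ) • z := by
        refine ⟨y₀, ?_⟩
        rw [hy₀, smul_smul]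
        congr 1
        push_cast
        ring
      -- witness 2 : mb • p divisible by r
      have h2 : ∃ z : G, (mb : ℤ) • p = (r : ℤ) • z := by
        apply stmt15_cancel_coprime _ (ℓ ^ e) r
          ((hℓ.coprime_iff_not_dvd.mpr (Nat.not_dvd_ordCompl hℓ hN0)).pow_left e)
        refine ⟨((ℓ ^ v : ℕ) : ℤ) • y, ?_⟩
        rw [smul_smul, smul_smul, ← Nat.cast_mul, ← Nat.cast_mul, hmdec,
          Nat.mul_comm r (ℓ ^ v), hNdec]
        exact hmy
      obtain ⟨c, hc⟩ := stmt15_smul_lcm ((mb : ℤ) • p) (d * mb) r h1 h2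
      -- the divisibility of the lcm
      have hdmb0 : d * mb ≠ 0 := by positivity
      have hX0 : dm * ℓ ^ (i - j) * mb ^ 2 ≠ 0 := by
        have := hℓ.pos
        positivity
      have hvval : v = j + 2 * e := by
        rw [hv, Nat.factorization_mul hdm0 (pow_ne_zero 2 hm0), Nat.factorization_pow]
        simp [hj, he, two_mul]
      have hdvdX : dm * ℓ ^ (i - j) * mb ^ 2 ∣ Nat.lcm (d * mb) r := by
        rw [← Nat.factorization_le_iff_dvd hX0 (Nat.lcm_ne_zero hdmb0 hr0), Finsupp.le_def]
        intro q
        rw [Nat.factorization_lcm hdmb0 hr0, Finsupp.sup_apply]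
        have hmbfact : mb.factorization q = if q = ℓ then 0 else m.factorization q := by
          rw [hmbdef, he, Nat.factorization_ordCompl m ℓ, Finsupp.erase_apply]
        have hrfact : r.factorization q =
            if q = ℓ then 0 else dm.factorization q + 2 * m.factorization q := by
          rw [hrdef, hv, Nat.factorization_ordCompl _ ℓ, Finsupp.erase_apply]
          rcases eq_or_ne q ℓ with h | h
          · simp [h]
          · simp only [h, if_false]
            rw [Nat.factorization_mul hdm0 (pow_ne_zero 2 hm0), Nat.factorization_pow]
            simp [two_mul]
        rw [
          Nat.factorization_mul (Nat.mul_ne_zero hdm0 (pow_ne_zero _ hℓ.pos.ne'))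
            (pow_ne_zero 2 hmb0),
          Nat.factorization_mul hdm0 (pow_ne_zero _ hℓ.pos.ne'),
          Nat.factorization_mul hd0 hmb0,
          hℓ.factorization_pow, Nat.factorization_pow]
        simp only [Finsupp.coe_add, Pi.add_apply, Finsupp.smul_apply, Finsupp.single_apply,
          smul_eq_mul]
        rw [hmbfact, hrfact]
        rcases eq_or_ne q ℓ with h | h
        · simp [h]
          try omega
        · simp [h, Ne.symm h]
          try omega
      obtain ⟨w, hw⟩ := hdvdX
      have hwitness : (mb : ℤ) • p = ((dm * ℓ ^ (i - j) * mb ^ 2 : ℕ) : ℤ) • ((w : ℤ) • c) := by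
        rw [hc, hw, smul_smul, ← Nat.cast_mul]
      have hle := hmmax (dm * ℓ ^ (i - j)) ⟨mb, (w : ℤ) • c, Nat.pos_of_ne_zero hmb0, hwitness⟩
      have h2le : 2 ≤ ℓ ^ (i - j) :=
        le_trans hℓ.two_le (Nat.le_self_pow (by omega) ℓ)
      have := Nat.mul_le_mul_left dm h2le
      omega
    · simp [Nat.factorization_eq_zero_of_not_prime _ hℓ]
  refine ⟨hA, hB, ?_, ?_⟩
  · intro hEq
    exact Nat.dvd_antisymm hB (by rw [← hEq]; exact hA)
  · intro hEq
    have hdmpos : 0 < dm := Nat.pos_of_ne_zero hdm0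
    have hBdvd' : dm * m ∣ dm * 1 := by
      rw [mul_one]
      conv_rhs => rw [hEq]
      exact hBdvd
    have hm1 : m = 1 := Nat.dvd_one.mp ((Nat.mul_dvd_mul_iff_left hdmpos).mp hBdvd')
    rw [hm1] at hmy
    have h2 : dm ≤ d := hdmax dm ⟨y, by simpa using hmy⟩
    have h3 : d ≤ dπ := by
      apply hdπmax d
      refine ⟨y₀, ?_⟩
      have : p - (d : ℤ) • y₀ = 0 := by rw [hy₀]; exact sub_self _
      rw [this]
      exact isOfFinAddOrder_iff_nsmul_eq_zero.mpr ⟨1, one_pos, by simp⟩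
    omega
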